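/- Let H = H_X ⊗ H_Y be a finite-dimensional Hilbert space, Π a projection on H, and 0 < t < 1. Then there exists an orthogonal decomposition H = S_{<t} ⊕ S_{≥t} such that both S_{<t} and S_{≥t} are invariant under Π and under I_X ⊗ |0⟩⟨0|_Y, and moreover: for every unit vector |φ⟩ ∈ H_X with |φ⟩|0⟩ ∈ S_{<t} one has ‖Π|φ⟩|0⟩‖² < t, and for every unit vector |φ⟩ ∈ H_X with |φ⟩|0⟩ ∈ S_{≥t} one has ‖Π|φ⟩|0⟩‖² ≥ t. -/

import Mathlib

open scoped ComplexInnerProductSpace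

/-- The product state `|φ⟩|e₀⟩` in `H_X ⊗ H_Y`, modelled as
`EuclideanSpace ℂ (Fin nx × Fin ny)`. -/
noncomputable def tensProd {nx ny : ℕ} (φ : EuclideanSpace ℂ (Fin nx))
    (e₀ : EuclideanSpace ℂ (Fin ny)) : EuclideanSpace ℂ (Fin nx × Fin ny) :=
  WithLp.toLp 2 (fun q : Fin nx × Fin ny => φ q.1 * e₀ q.2)

/-- The operator `I_X ⊗ |e₀⟩⟨e₀|_Y` on `H_X ⊗ H_Y`. -/
noncomputable def idTensProj {nx ny : ℕ} (e₀ : EuclideanSpace ℂ (Fin ny))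
    (ψ : EuclideanSpace ℂ (Fin nx × Fin ny)) : EuclideanSpace ℂ (Fin nx × Fin ny) :=
  WithLp.toLp 2 (fun q : Fin nx × Fin ny => e₀ q.2 * ∑ j, (starRingEnd ℂ) (e₀ j) * ψ (q.1, j))

noncomputable def tensL {nx ny : ℕ} (e₀ : EuclideanSpace ℂ (Fin ny)) :
    EuclideanSpace ℂ (Fin nx) →ₗ[ℂ] EuclideanSpace ℂ (Fin nx × Fin ny) where
  toFun φ := tensProd φ e₀
  map_add' φ ψ := PiLp.ext fun q => by simp [tensProd, add_mul]
  map_smul' c φ := PiLp.ext fun q => by simp [tensProd, mul_assoc]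

noncomputable def extrL {nx ny : ℕ} (e₀ : EuclideanSpace ℂ (Fin ny)) :
    EuclideanSpace ℂ (Fin nx × Fin ny) →ₗ[ℂ] EuclideanSpace ℂ (Fin nx) where
  toFun ψ := WithLp.toLp 2 (fun i => ∑ j, (starRingEnd ℂ) (e₀ j) * ψ (i, j))
  map_add' ψ ξ := PiLp.ext fun i => by
    show ∑ j, (starRingEnd ℂ) (e₀ j) * (ψ (i,j) + ξ (i,j)) = _
    simp [mul_add, Finset.sum_add_distrib]
  map_smul' c ψ := PiLp.ext fun i => by
    show ∑ j, (starRingEnd ℂ) (e₀ j) * (c * ψ (i,j)) = _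
    simp only [RingHom.id_apply, PiLp.smul_apply, PiLp.toLp_apply, smul_eq_mul, Finset.mul_sum]
    exact Finset.sum_congr rfl fun j _ => by ring

lemma idTensProj_eq {nx ny : ℕ} (e₀ : EuclideanSpace ℂ (Fin ny))
    (ψ : EuclideanSpace ℂ (Fin nx × Fin ny)) :
    idTensProj e₀ ψ = tensL e₀ (extrL e₀ ψ) := PiLp.ext fun q => mul_comm _ _

lemma inner_tensL {nx ny : ℕ} (e₀ : EuclideanSpace ℂ (Fin ny))
    (φ : EuclideanSpace ℂ (Fin nx)) (ξ : EuclideanSpace ℂ (Fin nx × Fin ny)) :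
    ⟪tensL e₀ φ, ξ⟫ = ⟪φ, extrL e₀ ξ⟫ := by
  simp only [PiLp.inner_apply, RCLike.inner_apply', PiLp.toLp_apply, tensL, extrL, LinearMap.coe_mk,
    AddHom.coe_mk, tensProd]
  rw [Fintype.sum_prod_type]
  simp only [map_mul, Finset.mul_sum]
  exact Finset.sum_congr rfl fun i _ => Finset.sum_congr rfl fun j _ => by ring

lemma inner_tensL' {nx ny : ℕ} (e₀ : EuclideanSpace ℂ (Fin ny))
    (φ : EuclideanSpace ℂ (Fin nx)) (ξ : EuclideanSpace ℂ (Fin nx × Fin ny)) :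
    ⟪ξ, tensL e₀ φ⟫ = ⟪extrL e₀ ξ, φ⟫ := by
  rw [← inner_conj_symm, inner_tensL, inner_conj_symm]

lemma extrL_tensL {nx ny : ℕ} {e₀ : EuclideanSpace ℂ (Fin ny)} (he₀ : ‖e₀‖ = 1)
    (φ : EuclideanSpace ℂ (Fin nx)) : extrL e₀ (tensL e₀ φ) = φ := by
  have h1 : ∑ j, (starRingEnd ℂ) (e₀ j) * e₀ j = 1 := by
    have := inner_self_eq_norm_sq_to_K (𝕜 := ℂ) e₀
    rw [he₀, PiLp.inner_apply] at this
    simp only [RCLike.inner_apply'] at this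
    rw [this]; norm_num
  refine PiLp.ext fun i => ?_
  show ∑ j, (starRingEnd ℂ) (e₀ j) * (φ i * e₀ j) = φ i
  calc ∑ j, (starRingEnd ℂ) (e₀ j) * (φ i * e₀ j)
      = φ i * ∑ j, (starRingEnd ℂ) (e₀ j) * e₀ j := by rw [Finset.mul_sum]; congr 1; ext j; ring
    _ = φ i := by rw [h1, mul_one]

/-- Decomposition of `H = H_X ⊗ H_Y` into `Π`- and `I_X ⊗ |0⟩⟨0|_Y`-invariant subspaces
`S_{<t}` and `S_{≥t}` on which the success probability of `Π` on states of the form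
`|φ⟩|0⟩` is `< t`, resp. `≥ t`. -/
theorem stmt6 {nx ny : ℕ}
    (P : EuclideanSpace ℂ (Fin nx × Fin ny) →ₗ[ℂ] EuclideanSpace ℂ (Fin nx × Fin ny))
    (hPidem : P ∘ₗ P = P) (hPsym : P.IsSymmetric)
    (e₀ : EuclideanSpace ℂ (Fin ny)) (he₀ : ‖e₀‖ = 1)
    (t : ℝ) (ht0 : 0 < t) (ht1 : t < 1) :
    ∃ Slt Sge : Submodule ℂ (EuclideanSpace ℂ (Fin nx × Fin ny)),
      Sge = Sltᗮ ∧
      (∀ x ∈ Slt, P x ∈ Slt) ∧ (∀ x ∈ Sge, P x ∈ Sge) ∧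
      (∀ x ∈ Slt, idTensProj e₀ x ∈ Slt) ∧ (∀ x ∈ Sge, idTensProj e₀ x ∈ Sge) ∧
      (∀ φ : EuclideanSpace ℂ (Fin nx), ‖φ‖ = 1 → tensProd φ e₀ ∈ Slt →
        ‖P (tensProd φ e₀)‖ ^ 2 < t) ∧
      (∀ φ : EuclideanSpace ℂ (Fin nx), ‖φ‖ = 1 → tensProd φ e₀ ∈ Sge →
        t ≤ ‖P (tensProd φ e₀)‖ ^ 2) := by
  classical
  have hLT : ∀ φ : EuclideanSpace ℂ (Fin nx), extrL e₀ (tensL e₀ φ) = φ :=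
    fun φ => extrL_tensL he₀ φ
  set M : EuclideanSpace ℂ (Fin nx) →ₗ[ℂ] EuclideanSpace ℂ (Fin nx) :=
    extrL e₀ ∘ₗ P ∘ₗ tensL e₀ with hMdef
  have hPP : ∀ x, P (P x) = P x := fun x => LinearMap.ext_iff.mp hPidem x
  have hMsym : M.IsSymmetric := by
    intro φ ψ
    show ⟪extrL e₀ (P (tensL e₀ φ)), ψ⟫ = ⟪φ, extrL e₀ (P (tensL e₀ ψ))⟫
    rw [← inner_tensL' e₀ ψ (P (tensL e₀ φ)), ← inner_tensL e₀ φ (P (tensL e₀ ψ))]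
    exact hPsym _ _
  have hn : Module.finrank ℂ (EuclideanSpace ℂ (Fin nx)) = nx := finrank_euclideanSpace_fin
  set b := hMsym.eigenvectorBasis hn with hbdef
  set μ := hMsym.eigenvalues hn with hμdef
  have hrepr : ∀ (φ : EuclideanSpace ℂ (Fin nx)) i, b.repr (M φ) i = μ i * b.repr φ i :=
    fun φ i => hMsym.eigenvectorBasis_apply_self_apply hn φ i
  -- the subspace of H_X spanned by eigenvectors with eigenvalue < t
  set Xlt : Submodule ℂ (EuclideanSpace ℂ (Fin nx)) :=
    { carrier := {φ | ∀ i, t ≤ μ i → b.repr φ i = 0}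
      add_mem' := by
        intro a c ha hc i hi
        rw [map_add]
        simp [ha i hi, hc i hi]
      zero_mem' := by intro i _; simp
      smul_mem' := by
        intro r a ha i hi
        rw [map_smul]
        simp [ha i hi] } with hXdef
  have hXmem : ∀ φ : EuclideanSpace ℂ (Fin nx),
      φ ∈ Xlt ↔ ∀ i, t ≤ μ i → b.repr φ i = 0 := fun φ => Iff.rfl
  set QL : EuclideanSpace ℂ (Fin nx × Fin ny) →ₗ[ℂ] EuclideanSpace ℂ (Fin nx × Fin ny) :=
    tensL e₀ ∘ₗ extrL e₀ with hQLdef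
  have hQ_eq : ∀ x, idTensProj e₀ x = QL x := fun x => idTensProj_eq e₀ x
  set V : Submodule ℂ (EuclideanSpace ℂ (Fin nx × Fin ny)) := Xlt.map (tensL e₀) with hVdef
  set Slt : Submodule ℂ (EuclideanSpace ℂ (Fin nx × Fin ny)) := V ⊔ V.map P with hSdef
  -- invariance under P
  have hMXa : ∀ a, a ∈ Xlt → M a ∈ Xlt := by
    intro a ha
    have ha' : ∀ i, t ≤ μ i → b.repr a i = 0 := (hXmem a).mp ha
    exact (hXmem (M a)).mpr fun i hi => by rw [hrepr, ha' i hi, mul_zero]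
  have hPSlt : ∀ x ∈ Slt, P x ∈ Slt := by
    have h2 : (V.map P).map P = V.map P := by
      rw [← Submodule.map_comp, hPidem]
    have hmap : Slt.map P ≤ Slt := by
      rw [hSdef, Submodule.map_sup, h2]
      exact sup_le le_sup_right le_sup_right
    exact fun x hx => hmap (Submodule.mem_map_of_mem hx)
  -- invariance under QL, with image inside V
  have hQV : ∀ v ∈ V, QL v ∈ V := by
    rintro _ ⟨a, ha, rfl⟩
    have h : QL (tensL e₀ a) = tensL e₀ a := by
      show tensL e₀ (extrL e₀ (tensL e₀ a)) = tensL e₀ a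
      rw [hLT]
    rw [h]
    exact ⟨a, ha, rfl⟩
  have hQPV : ∀ v ∈ V, QL (P v) ∈ V := by
    rintro _ ⟨a, ha, rfl⟩
    exact ⟨M a, hMXa a ha, rfl⟩
  have hQSlt : ∀ x ∈ Slt, QL x ∈ V := by
    intro x hx
    rw [hSdef, Submodule.mem_sup] at hx
    obtain ⟨v, hv, w, hw, rfl⟩ := hx
    obtain ⟨y, hy, rfl⟩ := hw
    rw [map_add]
    exact V.add_mem (hQV v hv) (hQPV y hy)
  have hVSlt : V ≤ Slt := le_sup_left
  have hQSlt' : ∀ x ∈ Slt, QL x ∈ Slt := fun x hx => hVSlt (hQSlt x hx)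
  -- symmetry of QL
  have hQsym : ∀ ψ ξ, ⟪QL ψ, ξ⟫ = ⟪ψ, QL ξ⟫ := by
    intro ψ ξ
    show ⟪tensL e₀ (extrL e₀ ψ), ξ⟫ = ⟪ψ, tensL e₀ (extrL e₀ ξ)⟫
    rw [inner_tensL e₀ (extrL e₀ ψ) ξ, inner_tensL' e₀ (extrL e₀ ξ) ψ]
  -- norm formula
  have key : ∀ φ : EuclideanSpace ℂ (Fin nx),
      (‖P (tensProd φ e₀)‖ ^ 2 : ℝ) = ∑ i, μ i * Complex.normSq (b.repr φ i) := by
    intro φ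
    have h1 : ⟪φ, M φ⟫ = ((‖P (tensL e₀ φ)‖ ^ 2 : ℝ) : ℂ) := by
      show ⟪φ, extrL e₀ (P (tensL e₀ φ))⟫ = _
      rw [← inner_tensL]
      conv_lhs => rw [← hPP (tensL e₀ φ)]
      rw [← hPsym]
      exact_mod_cast inner_self_eq_norm_sq_to_K (𝕜 := ℂ) (P (tensL e₀ φ))
    have h2 : ⟪φ, M φ⟫ = ∑ i, ((μ i : ℂ) * (Complex.normSq (b.repr φ i) : ℂ)) := by
      rw [← b.repr.inner_map_map φ (M φ), PiLp.inner_apply]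
      refine Finset.sum_congr rfl fun i _ => ?_
      rw [RCLike.inner_apply', hrepr φ i,
        show (starRingEnd ℂ) (b.repr φ i) * ((μ i : ℂ) * b.repr φ i)
          = (μ i : ℂ) * (b.repr φ i * (starRingEnd ℂ) (b.repr φ i)) from by ring,
        Complex.mul_conj]
    have h3 := h1.symm.trans h2
    have h4 : (‖P (tensL e₀ φ)‖ ^ 2 : ℝ) = ∑ i, μ i * Complex.normSq (b.repr φ i) := by exact_mod_cast h3
    exact h4
  have norm1 : ∀ φ : EuclideanSpace ℂ (Fin nx), ‖φ‖ = 1 →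
      ∑ i, Complex.normSq (b.repr φ i) = 1 := by
    intro φ hφ
    have h1 : ⟪φ, φ⟫ = ((1 : ℝ) : ℂ) := by
      rw [inner_self_eq_norm_sq_to_K (𝕜 := ℂ) φ, hφ]
      norm_num
    have h2 : ⟪φ, φ⟫ = ∑ i, (Complex.normSq (b.repr φ i) : ℂ) := by
      rw [← b.repr.inner_map_map φ φ, PiLp.inner_apply]
      refine Finset.sum_congr rfl fun i _ => ?_
      rw [RCLike.inner_apply', mul_comm, Complex.mul_conj]
    have h3 := h1.symm.trans h2
    exact_mod_cast h3.symm
  refine ⟨Slt, Sltᗮ, rfl, hPSlt, ?_, ?_, ?_, ?_, ?_⟩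
  · -- P preserves Sltᗮ
    intro x hx
    rw [Submodule.mem_orthogonal] at hx ⊢
    intro u hu
    rw [← hPsym u x]
    exact hx _ (hPSlt u hu)
  · -- QL preserves Slt
    intro x hx
    rw [hQ_eq]
    exact hQSlt' x hx
  · -- QL preserves Sltᗮ
    intro x hx
    rw [hQ_eq]
    rw [Submodule.mem_orthogonal] at hx ⊢
    intro u hu
    rw [← hQsym u x]
    exact hx _ (hQSlt' u hu)
  · -- < t on Slt
    intro φ hφ hmem
    have hTφV : tensL e₀ φ ∈ V := by
      have h1 : QL (tensProd φ e₀) ∈ V := hQSlt _ hmem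
      have h2 : QL (tensProd φ e₀) = tensL e₀ φ := by
        show tensL e₀ (extrL e₀ (tensL e₀ φ)) = tensL e₀ φ
        rw [hLT]
      rwa [h2] at h1
    obtain ⟨ψ, hψ, he⟩ := hTφV
    have hφX : ∀ i, t ≤ μ i → b.repr φ i = 0 := by
      have hψφ : ψ = φ := by
        have := congrArg (extrL e₀) he
        rwa [hLT, hLT] at this
      exact (hXmem φ).mp (hψφ ▸ hψ)
    rw [key φ]
    have hsum1 := norm1 φ hφ
    have hne : ∃ i₀, Complex.normSq (b.repr φ i₀) ≠ 0 := by
      by_contra h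
      push_neg at h
      rw [Finset.sum_eq_zero (fun i _ => h i)] at hsum1
      norm_num at hsum1
    obtain ⟨i₀, hi₀⟩ := hne
    calc ∑ i, μ i * Complex.normSq (b.repr φ i)
        < ∑ i, t * Complex.normSq (b.repr φ i) := by
          apply Finset.sum_lt_sum
          · intro i _
            by_cases hc : t ≤ μ i
            · rw [hφX i hc]; simp
            · exact mul_le_mul_of_nonneg_right (le_of_not_ge hc) (Complex.normSq_nonneg _)
          · refine ⟨i₀, Finset.mem_univ _, ?_⟩
            have hν : 0 < Complex.normSq (b.repr φ i₀) :=
              lt_of_le_of_ne (Complex.normSq_nonneg _) (Ne.symm hi₀)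
            have hμ : μ i₀ < t := by
              by_contra h
              push_neg at h
              exact hi₀ (by rw [hφX i₀ h]; simp)
            exact mul_lt_mul_of_pos_right hμ hν
      _ = t := by rw [← Finset.mul_sum, hsum1, mul_one]
  · -- ≥ t on Sltᗮ
    intro φ hφ hmem
    have hc : ∀ i, μ i < t → b.repr φ i = 0 := by
      intro i hi
      have hbX : b i ∈ Xlt := by
        rw [hXmem]
        intro i' hi'
        rw [OrthonormalBasis.repr_self, EuclideanSpace.single_apply]
        have hne : i' ≠ i := fun h => absurd hi (not_lt.mpr (h ▸ hi'))
        simp [hne]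
      have hTb : tensL e₀ (b i) ∈ Slt := hVSlt (Submodule.mem_map_of_mem hbX)
      have h0 : ⟪tensL e₀ (b i), tensProd φ e₀⟫ = 0 :=
        (Submodule.mem_orthogonal Slt _).mp hmem _ hTb
      rw [show (tensProd φ e₀ : EuclideanSpace ℂ (Fin nx × Fin ny)) = tensL e₀ φ from rfl,
        inner_tensL, hLT] at h0
      rw [b.repr_apply_apply]
      exact h0
    rw [key φ]
    have hsum1 := norm1 φ hφ
    calc t = ∑ i, t * Complex.normSq (b.repr φ i) := by
          rw [← Finset.mul_sum, hsum1, mul_one]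
      _ ≤ ∑ i, μ i * Complex.normSq (b.repr φ i) := by
          refine Finset.sum_le_sum fun i _ => ?_
          by_cases h : μ i < t
          · rw [hc i h]; simp
          · exact mul_le_mul_of_nonneg_right (le_of_not_gt h) (Complex.normSq_nonneg _)
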